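/- Let 0 < α < 1 and let a, b be reals with a > 1 > b > 0 and (ln a)/(ln b) irrational. Let E(a) = diag(a, 1, a^(α/(α−1))), E(b) = diag(b, 1, b^(α/(α−1))), and S = diag(1, −1, 1) act on ℝ³. If C ⊆ ℝ³ is a closed convex cone such that E(a)(C) ⊆ C, E(b)(C) ⊆ C, S(C) ⊆ C, the point (1,1,1) belongs to C, and the point (α, 1, 1−α) belongs to the dual cone C*, then C = K_α. -/

import Mathlib

open Real

/-- The power cone `K_α = {(x₁,x₂,x₃) : x₁ ≥ 0, x₃ ≥ 0, x₁^α·x₃^(1−α) ≥ |x₂|}`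
(real powers are `Real.rpow`). -/
def Kpow (α : ℝ) : Set (Fin 3 → ℝ) :=
  {x | 0 ≤ x 0 ∧ 0 ≤ x 2 ∧ |x 1| ≤ x 0 ^ α * x 2 ^ (1 - α)}

/-- The dual cone of `C ⊆ ℝ³` with respect to the standard inner product. -/
def dualCone (C : Set (Fin 3 → ℝ)) : Set (Fin 3 → ℝ) :=
  {y | ∀ x ∈ C, 0 ≤ y 0 * x 0 + y 1 * x 1 + y 2 * x 2}

/-- The diagonal matrix `E(a) = diag(a, 1, a^(α/(α−1)))` acting on `ℝ³`. -/
noncomputable def Emap (α a : ℝ) (x : Fin 3 → ℝ) : Fin 3 → ℝ :=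
  ![a * x 0, x 1, a ^ (α / (α - 1)) * x 2]

/-- The diagonal matrix `S = diag(1, −1, 1)` acting on `ℝ³`. -/
def Smap (x : Fin 3 → ℝ) : Fin 3 → ℝ := ![x 0, -x 1, x 2]

lemma exists_small_combo (p q : ℝ) (hp : 0 < p) (hq : q < 0)
    (hirr : Irrational (p / q)) (ε : ℝ) (hε : 0 < ε) :
    ∃ m n : ℕ, ((m : ℝ) * p + n * q ≠ 0) ∧ |(m : ℝ) * p + n * q| < ε := by
  have hnq : 0 < -q := neg_pos.2 hq
  set ξ := p / (-q) with hξ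
  have hξpos : 0 < ξ := div_pos hp hnq
  have hirrξ : Irrational ξ := by
    have h : ξ = -(p / q) := by rw [hξ, div_neg]
    rw [h]; exact hirr.neg
  set δ := min (ε / (-q)) ξ with hδdef
  have hδ : 0 < δ := lt_min (div_pos hε hnq) hξpos
  obtain ⟨N, hN⟩ := exists_nat_gt (1 / δ)
  have hNpos : 0 < N + 1 := Nat.succ_pos N
  obtain ⟨j, k, hk0, hkN, happ⟩ := Real.exists_int_int_abs_mul_sub_le ξ hNpos
  have hδ1 : δ * (1 / δ) = 1 := by field_simp
  have hsmall : |(k : ℝ) * ξ - j| < δ := by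
    refine happ.trans_lt ?_
    push_cast
    rw [div_lt_iff₀ (by positivity)]
    nlinarith [mul_lt_mul_of_pos_left hN hδ]
  have hkpos : (0 : ℝ) < (k : ℝ) := by exact_mod_cast hk0
  have hk1 : (1 : ℝ) ≤ (k : ℝ) := by exact_mod_cast hk0
  have hkξ : ξ ≤ (k : ℝ) * ξ := le_mul_of_one_le_left hξpos.le hk1
  have habs := abs_lt.1 hsmall
  have hδξ : δ ≤ ξ := min_le_right _ _
  have hjpos : (0 : ℝ) < (j : ℝ) := by linarith [habs.2]
  have hj0 : 0 ≤ j := by exact_mod_cast hjpos.le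
  have hkc : ((k.toNat : ℕ) : ℝ) = (k : ℝ) := by exact_mod_cast Int.toNat_of_nonneg hk0.le
  have hjc : ((j.toNat : ℕ) : ℝ) = (j : ℝ) := by exact_mod_cast Int.toNat_of_nonneg hj0
  have key : ((k.toNat : ℕ) : ℝ) * p + ((j.toNat : ℕ) : ℝ) * q = (-q) * ((k : ℝ) * ξ - j) := by
    have hqne : q ≠ 0 := ne_of_lt hq
    rw [hkc, hjc, hξ]
    field_simp
    ring
  refine ⟨k.toNat, j.toNat, ?_, ?_⟩
  · rw [key]
    have hne : (k : ℝ) * ξ - j ≠ 0 := sub_ne_zero.2 ((hirrξ.intCast_mul hk0.ne').ne_int j)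
    exact mul_ne_zero (ne_of_gt hnq) hne
  · rw [key, abs_mul, abs_of_pos hnq]
    have h2 : |(k : ℝ) * ξ - j| < ε / (-q) := hsmall.trans_le (min_le_left _ _)
    calc (-q) * |(k : ℝ) * ξ - j| < (-q) * (ε / (-q)) := by
          exact mul_lt_mul_of_pos_left h2 hnq
      _ = ε := by
          have hqne : q ≠ 0 := ne_of_lt hq
          field_simp

lemma dense_nat_combo (p q : ℝ) (hp : 0 < p) (hq : q < 0)
    (hirr : Irrational (p / q)) (z ε : ℝ) (hε : 0 < ε) :
    ∃ m n : ℕ, |(m : ℝ) * p + n * q - z| < ε := by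
  obtain ⟨m0, n0, he0, heε⟩ := exists_small_combo p q hp hq hirr ε hε
  set e := (m0 : ℝ) * p + n0 * q with hedef
  rcases he0.lt_or_gt with hneg | hpos
  · -- e < 0 : use n*p ≥ z and step down by -e
    obtain ⟨n, hn⟩ := exists_nat_ge (z / p)
    have hnp : z ≤ (n : ℝ) * p := by
      rw [div_le_iff₀ hp] at hn; linarith
    have hme : 0 < -e := neg_pos.2 hneg
    have hnum : 0 ≤ ((n : ℝ) * p - z) / (-e) := div_nonneg (by linarith) hme.le
    set K := (⌊((n : ℝ) * p - z) / (-e)⌋).toNat with hK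
    have hKc : ((K : ℕ) : ℝ) = (⌊((n : ℝ) * p - z) / (-e)⌋ : ℝ) := by
      rw [hK]; exact_mod_cast Int.toNat_of_nonneg (Int.floor_nonneg.2 hnum)
    have h1 : ((K : ℕ) : ℝ) ≤ ((n : ℝ) * p - z) / (-e) := by
      rw [hKc]; exact Int.floor_le _
    have h2 : ((n : ℝ) * p - z) / (-e) < (K : ℝ) + 1 := by
      rw [hKc]; exact Int.lt_floor_add_one _
    refine ⟨n + K * m0, K * n0, ?_⟩
    have hval : (((n + K * m0 : ℕ)) : ℝ) * p + ((K * n0 : ℕ) : ℝ) * q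
        = (n : ℝ) * p + (K : ℝ) * e := by push_cast; rw [hedef]; ring
    rw [hval, abs_lt]
    rw [le_div_iff₀ hme] at h1
    rw [div_lt_iff₀ hme] at h2
    have heabs : -e < ε := by rw [abs_of_neg hneg] at heε; linarith
    constructor <;> nlinarith
  · -- e > 0 : use n*q ≤ z and step up by e
    obtain ⟨n, hn⟩ := exists_nat_ge (z / q)
    have hnq : (n : ℝ) * q ≤ z := by
      rw [div_le_iff_of_neg hq] at hn; linarith
    have hnum : 0 ≤ (z - (n : ℝ) * q) / e := div_nonneg (by linarith) hpos.le
    set K := (⌊(z - (n : ℝ) * q) / e⌋).toNat with hK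
    have hKc : ((K : ℕ) : ℝ) = (⌊(z - (n : ℝ) * q) / e⌋ : ℝ) := by
      rw [hK]; exact_mod_cast Int.toNat_of_nonneg (Int.floor_nonneg.2 hnum)
    have h1 : ((K : ℕ) : ℝ) ≤ (z - (n : ℝ) * q) / e := by
      rw [hKc]; exact Int.floor_le _
    have h2 : (z - (n : ℝ) * q) / e < (K : ℝ) + 1 := by
      rw [hKc]; exact Int.lt_floor_add_one _
    refine ⟨K * m0, n + K * n0, ?_⟩
    have hval : ((K * m0 : ℕ) : ℝ) * p + ((n + K * n0 : ℕ) : ℝ) * q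
        = (n : ℝ) * q + (K : ℝ) * e := by push_cast; rw [hedef]; ring
    rw [hval, abs_lt]
    rw [le_div_iff₀ hpos] at h1
    rw [div_lt_iff₀ hpos] at h2
    have heabs : e < ε := by rw [abs_of_pos hpos] at heε; linarith
    constructor <;> nlinarith

noncomputable def fGen (β z : ℝ) : Fin 3 → ℝ := ![Real.exp z, 1, Real.exp (β * z)]

noncomputable def gGen (α β z : ℝ) : Fin 3 → ℝ :=
  ![α * Real.exp z, 1, (1 - α) * Real.exp (β * z)]

/-- For `0 < α < 1` and `a > 1 > b > 0` with `(ln a)/(ln b)` irrational, any closed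
convex cone `C` stable under `E(a)`, `E(b)` and `S`, containing `(1,1,1)` and with
`(α,1,1−α)` in its dual cone, equals the power cone `K_α`. -/
theorem stable_cone_eq_Kpow (α a b : ℝ) (hα0 : 0 < α) (hα1 : α < 1)
    (ha : 1 < a) (hb1 : b < 1) (hb0 : 0 < b)
    (hirr : Irrational (Real.log a / Real.log b))
    (C : Set (Fin 3 → ℝ))
    (hclosed : IsClosed C) (hconv : Convex ℝ C)
    (hcone : ∀ (c : ℝ) (x : Fin 3 → ℝ), 0 ≤ c → x ∈ C → c • x ∈ C)
    (hEa : Set.MapsTo (Emap α a) C C) (hEb : Set.MapsTo (Emap α b) C C)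
    (hS : Set.MapsTo Smap C C)
    (hτ : (![1, 1, 1] : Fin 3 → ℝ) ∈ C)
    (hπ : (![α, 1, 1 - α] : Fin 3 → ℝ) ∈ dualCone C) :
    C = Kpow α := by
  have ha0 : 0 < a := lt_trans one_pos ha
  have hαne : α - 1 ≠ 0 := by linarith
  set β := α / (α - 1) with hβdef
  have hβneg : β < 0 := div_neg_of_pos_of_neg hα0 (by linarith)
  have h1β : 0 < 1 - β := by linarith
  have i1 : (1 - β) * (1 - α) = 1 := by rw [hβdef]; field_simp; ring
  have i2 : β * (1 - α) = -α := by rw [hβdef]; field_simp; ring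
  have i3 : β * (α - 1) = α := by rw [hβdef]; field_simp
  have i4 : (1 - β) * α = -β := by rw [hβdef]; field_simp; ring
  set p := Real.log a with hpdef
  set q := Real.log b with hqdef
  have hp : 0 < p := Real.log_pos ha
  have hq : q < 0 := Real.log_neg hb0 hb1
  -- stepping identities
  have hstepf : ∀ (t : ℝ), 0 < t → ∀ z, Emap α t (fGen β z) = fGen β (z + Real.log t) := by
    intro t ht z
    funext i
    fin_cases i <;> simp [Emap, fGen, ← hβdef]
    · rw [Real.exp_add, Real.exp_log ht]; ring
    · rw [Real.rpow_def_of_pos ht, ← Real.exp_add]; congr 1; ring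
  have hstepg : ∀ (t : ℝ), 0 < t → ∀ z, Emap α t (gGen α β z) = gGen α β (z + Real.log t) := by
    intro t ht z
    funext i
    fin_cases i <;> simp [Emap, gGen, ← hβdef]
    · rw [Real.exp_add, Real.exp_log ht]; ring
    · rw [Real.rpow_def_of_pos ht,
        show β * (z + Real.log t) = Real.log t * β + β * z by ring, Real.exp_add]
      ring
  -- dual stability
  have hdualE : ∀ (t : ℝ), Set.MapsTo (Emap α t) C C →
      ∀ y ∈ dualCone C, Emap α t y ∈ dualCone C := by
    intro t hmap y hy x hx
    have h := hy (Emap α t x) (hmap hx)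
    have heq : Emap α t y 0 * x 0 + Emap α t y 1 * x 1 + Emap α t y 2 * x 2
        = y 0 * Emap α t x 0 + y 1 * Emap α t x 1 + y 2 * Emap α t x 2 := by
      simp [Emap]; ring
    rw [heq]; exact h
  -- membership on the dense set
  have hf_mem : ∀ m n : ℕ, fGen β ((m : ℝ) * p + n * q) ∈ C := by
    have base : fGen β 0 ∈ C := by
      have h : fGen β 0 = ![1, 1, 1] := by funext i; fin_cases i <;> simp [fGen]
      rwa [h]
    have stepa : ∀ z, fGen β z ∈ C → fGen β (z + p) ∈ C := fun z hz => by
      rw [hpdef, ← hstepf a ha0 z]; exact hEa hz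
    have stepb : ∀ z, fGen β z ∈ C → fGen β (z + q) ∈ C := fun z hz => by
      rw [hqdef, ← hstepf b hb0 z]; exact hEb hz
    have h1 : ∀ (m : ℕ) (z : ℝ), fGen β z ∈ C → fGen β (z + m * p) ∈ C := by
      intro m
      induction m with
      | zero => intro z hz; simpa using hz
      | succ k ih =>
          intro z hz
          have h := stepa _ (ih z hz)
          have heq : z + (k : ℝ) * p + p = z + ((k : ℕ) + 1 : ℕ) * p := by push_cast; ring
          rwa [heq] at h
    have h2 : ∀ (n : ℕ) (z : ℝ), fGen β z ∈ C → fGen β (z + n * q) ∈ C := by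
      intro n
      induction n with
      | zero => intro z hz; simpa using hz
      | succ k ih =>
          intro z hz
          have h := stepb _ (ih z hz)
          have heq : z + (k : ℝ) * q + q = z + ((k : ℕ) + 1 : ℕ) * q := by push_cast; ring
          rwa [heq] at h
    intro m n
    have h := h2 n _ (h1 m 0 base)
    have heq : (0 : ℝ) + m * p + n * q = m * p + n * q := by ring
    rwa [heq] at h
  have hg_mem : ∀ m n : ℕ, gGen α β ((m : ℝ) * p + n * q) ∈ dualCone C := by
    have base : gGen α β 0 ∈ dualCone C := by
      have h : gGen α β 0 = ![α, 1, 1 - α] := by funext i; fin_cases i <;> simp [gGen]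
      rwa [h]
    have stepa : ∀ z, gGen α β z ∈ dualCone C → gGen α β (z + p) ∈ dualCone C := fun z hz => by
      rw [hpdef, ← hstepg a ha0 z]; exact hdualE a hEa _ hz
    have stepb : ∀ z, gGen α β z ∈ dualCone C → gGen α β (z + q) ∈ dualCone C := fun z hz => by
      rw [hqdef, ← hstepg b hb0 z]; exact hdualE b hEb _ hz
    have h1 : ∀ (m : ℕ) (z : ℝ), gGen α β z ∈ dualCone C → gGen α β (z + m * p) ∈ dualCone C := by
      intro m
      induction m with
      | zero => intro z hz; simpa using hz
      | succ k ih =>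
          intro z hz
          have h := stepa _ (ih z hz)
          have heq : z + (k : ℝ) * p + p = z + ((k : ℕ) + 1 : ℕ) * p := by push_cast; ring
          rwa [heq] at h
    have h2 : ∀ (n : ℕ) (z : ℝ), gGen α β z ∈ dualCone C → gGen α β (z + n * q) ∈ dualCone C := by
      intro n
      induction n with
      | zero => intro z hz; simpa using hz
      | succ k ih =>
          intro z hz
          have h := stepb _ (ih z hz)
          have heq : z + (k : ℝ) * q + q = z + ((k : ℕ) + 1 : ℕ) * q := by push_cast; ring
          rwa [heq] at h
    intro m n
    have h := h2 n _ (h1 m 0 base)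
    have heq : (0 : ℝ) + m * p + n * q = m * p + n * q := by ring
    rwa [heq] at h
  -- closedness of dual cone
  have hdualclosed : IsClosed (dualCone C) := by
    have hrepr : dualCone C
        = ⋂ x ∈ C, {y : Fin 3 → ℝ | 0 ≤ y 0 * x 0 + y 1 * x 1 + y 2 * x 2} := by
      ext y; simp [dualCone]
    rw [hrepr]
    exact isClosed_biInter fun x _ => isClosed_le continuous_const (by fun_prop)
  -- continuity
  have hcontf : Continuous (fGen β) := by
    apply continuous_pi
    intro i
    fin_cases i <;> simp [fGen] <;> fun_prop
  have hcontg : Continuous (gGen α β) := by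
    apply continuous_pi
    intro i
    fin_cases i <;> simp [gGen] <;> fun_prop
  -- closure argument
  have hclosure : ∀ (F : ℝ → Fin 3 → ℝ), Continuous F → ∀ (D : Set (Fin 3 → ℝ)), IsClosed D →
      (∀ m n : ℕ, F ((m : ℝ) * p + n * q) ∈ D) → ∀ z, F z ∈ D := by
    intro F hF D hD hMem z
    have hseq : ∀ k : ℕ, ∃ w : ℝ, (∃ m n : ℕ, w = (m : ℝ) * p + n * q)
        ∧ |w - z| < 1 / ((k : ℝ) + 1) := by
      intro k
      obtain ⟨m, n, h⟩ := dense_nat_combo p q hp hq hirr z (1 / ((k : ℝ) + 1)) (by positivity)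
      exact ⟨_, ⟨m, n, rfl⟩, h⟩
    choose w hw hwz using hseq
    have hlim : Filter.Tendsto w Filter.atTop (nhds z) := by
      rw [tendsto_iff_dist_tendsto_zero]
      refine squeeze_zero (fun k => dist_nonneg) (fun k => ?_)
        tendsto_one_div_add_atTop_nhds_zero_nat
      rw [Real.dist_eq]; exact (hwz k).le
    refine hD.mem_of_tendsto ((hF.tendsto z).comp hlim) (Filter.Eventually.of_forall fun k => ?_)
    obtain ⟨m, n, hmn⟩ := hw k
    simp only [Function.comp_apply, hmn]
    exact hMem m n
  have hfall : ∀ z, fGen β z ∈ C := hclosure _ hcontf C hclosed hf_mem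
  have hgall : ∀ z, gGen α β z ∈ dualCone C := hclosure _ hcontg _ hdualclosed hg_mem
  -- addition
  have hadd : ∀ u v : Fin 3 → ℝ, u ∈ C → v ∈ C → u + v ∈ C := by
    intro u v hu hv
    have h := hconv hu hv (by norm_num : (0:ℝ) ≤ 1/2) (by norm_num : (0:ℝ) ≤ 1/2) (by norm_num)
    have h2 := hcone 2 _ (by norm_num) h
    have heq : (2 : ℝ) • ((1/2 : ℝ) • u + (1/2 : ℝ) • v) = u + v := by
      rw [smul_add, ← mul_smul, ← mul_smul]; norm_num
    rwa [heq] at h2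
  -- limit rays
  have hexpnegnat : Filter.Tendsto (fun n : ℕ => Real.exp (-(n : ℝ))) Filter.atTop (nhds 0) := by
    exact Real.tendsto_exp_neg_atTop_nhds_zero.comp tendsto_natCast_atTop_atTop
  have e1mem : (![1, 0, 0] : Fin 3 → ℝ) ∈ C := by
    have hmem : ∀ n : ℕ, Real.exp (-(n : ℝ)) • fGen β (n : ℝ) ∈ C :=
      fun n => hcone _ _ (Real.exp_pos _).le (hfall _)
    have hlim : Filter.Tendsto (fun n : ℕ => Real.exp (-(n : ℝ)) • fGen β (n : ℝ))
        Filter.atTop (nhds ![1, 0, 0]) := by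
      rw [tendsto_pi_nhds]
      intro i
      fin_cases i
      · show Filter.Tendsto (fun n : ℕ => Real.exp (-(n : ℝ)) * Real.exp (n : ℝ))
          Filter.atTop (nhds 1)
        have h : (fun n : ℕ => Real.exp (-(n : ℝ)) * Real.exp (n : ℝ)) = fun _ => (1 : ℝ) := by
          funext n; rw [← Real.exp_add]; simp
        rw [h]; exact tendsto_const_nhds
      · show Filter.Tendsto (fun n : ℕ => Real.exp (-(n : ℝ)) * 1) Filter.atTop (nhds 0)
        simpa using hexpnegnat
      · show Filter.Tendsto (fun n : ℕ => Real.exp (-(n : ℝ)) * Real.exp (β * (n : ℝ)))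
          Filter.atTop (nhds 0)
        have h : (fun n : ℕ => Real.exp (-(n : ℝ)) * Real.exp (β * (n : ℝ)))
            = fun n : ℕ => Real.exp (-((1 - β) * (n : ℝ))) := by
          funext n; rw [← Real.exp_add]; congr 1; ring
        rw [h]
        have hinner : Filter.Tendsto (fun n : ℕ => (1 - β) * (n : ℝ)) Filter.atTop Filter.atTop :=
          Filter.Tendsto.const_mul_atTop h1β tendsto_natCast_atTop_atTop
        exact Real.tendsto_exp_neg_atTop_nhds_zero.comp hinner
    exact hclosed.mem_of_tendsto hlim (Filter.Eventually.of_forall hmem)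
  have e3mem : (![0, 0, 1] : Fin 3 → ℝ) ∈ C := by
    have hmem : ∀ n : ℕ, Real.exp (β * (n : ℝ)) • fGen β (-(n : ℝ)) ∈ C :=
      fun n => hcone _ _ (Real.exp_pos _).le (hfall _)
    have hmβ : 0 < -β := neg_pos.2 hβneg
    have hlim : Filter.Tendsto (fun n : ℕ => Real.exp (β * (n : ℝ)) • fGen β (-(n : ℝ)))
        Filter.atTop (nhds ![0, 0, 1]) := by
      rw [tendsto_pi_nhds]
      intro i
      fin_cases i
      · show Filter.Tendsto (fun n : ℕ => Real.exp (β * (n : ℝ)) * Real.exp (-(n : ℝ)))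
          Filter.atTop (nhds 0)
        have h : (fun n : ℕ => Real.exp (β * (n : ℝ)) * Real.exp (-(n : ℝ)))
            = fun n : ℕ => Real.exp (-((1 - β) * (n : ℝ))) := by
          funext n; rw [← Real.exp_add]; congr 1; ring
        rw [h]
        have hinner : Filter.Tendsto (fun n : ℕ => (1 - β) * (n : ℝ)) Filter.atTop Filter.atTop :=
          Filter.Tendsto.const_mul_atTop h1β tendsto_natCast_atTop_atTop
        exact Real.tendsto_exp_neg_atTop_nhds_zero.comp hinner
      · show Filter.Tendsto (fun n : ℕ => Real.exp (β * (n : ℝ)) * 1) Filter.atTop (nhds 0)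
        have h : (fun n : ℕ => Real.exp (β * (n : ℝ)) * 1)
            = fun n : ℕ => Real.exp (-((-β) * (n : ℝ))) := by
          funext n; rw [mul_one]; congr 1; ring
        rw [h]
        have hinner : Filter.Tendsto (fun n : ℕ => (-β) * (n : ℝ)) Filter.atTop Filter.atTop :=
          Filter.Tendsto.const_mul_atTop hmβ tendsto_natCast_atTop_atTop
        exact Real.tendsto_exp_neg_atTop_nhds_zero.comp hinner
      · show Filter.Tendsto (fun n : ℕ => Real.exp (β * (n : ℝ)) * Real.exp (β * (-(n : ℝ))))
          Filter.atTop (nhds 1)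
        have h : (fun n : ℕ => Real.exp (β * (n : ℝ)) * Real.exp (β * (-(n : ℝ))))
            = fun _ => (1 : ℝ) := by
          funext n; rw [← Real.exp_add]; rw [show β * (n : ℝ) + β * (-(n : ℝ)) = 0 by ring]
          exact Real.exp_zero
        rw [h]; exact tendsto_const_nhds
    exact hclosed.mem_of_tendsto hlim (Filter.Eventually.of_forall hmem)
  -- key inequality
  have hKey : ∀ x ∈ C, ∀ z : ℝ,
      |x 1| ≤ α * Real.exp z * x 0 + (1 - α) * Real.exp (β * z) * x 2 := by
    intro x hx z
    have h1 := hgall z x hx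
    have h2 := hgall z (Smap x) (hS hx)
    simp only [gGen, Smap, Matrix.cons_val_zero, Matrix.cons_val_one, Matrix.head_cons,
      Matrix.cons_val_two, Matrix.tail_cons] at h1 h2
    rw [abs_le]
    constructor <;> nlinarith [h1, h2]
  have hpos2 : ∀ x ∈ C, ∀ z : ℝ,
      0 ≤ α * Real.exp z * x 0 + (1 - α) * Real.exp (β * z) * x 2 :=
    fun x hx z => le_trans (abs_nonneg _) (hKey x hx z)
  have hx0nn : ∀ x ∈ C, 0 ≤ x 0 := by
    intro x hx
    have hbound : ∀ z : ℝ, 0 ≤ α * x 0 + (1 - α) * Real.exp ((β - 1) * z) * x 2 := by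
      intro z
      have h := mul_nonneg (Real.exp_pos (-z)).le (hpos2 x hx z)
      have e0 : Real.exp (-z) * Real.exp z = 1 := by rw [← Real.exp_add]; simp
      have e2 : Real.exp ((β - 1) * z) = Real.exp (β * z) * Real.exp (-z) := by
        rw [← Real.exp_add]; congr 1; ring
      have heq : Real.exp (-z) * (α * Real.exp z * x 0 + (1 - α) * Real.exp (β * z) * x 2)
          = α * x 0 + (1 - α) * Real.exp ((β - 1) * z) * x 2 := by
        rw [e2]; linear_combination (α * x 0) * e0
      rw [heq] at h; exact h
    have hexp : Filter.Tendsto (fun z : ℝ => Real.exp ((β - 1) * z)) Filter.atTop (nhds 0) := by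
      have h : (fun z : ℝ => Real.exp ((β - 1) * z)) = fun z => Real.exp (-((1 - β) * z)) := by
        funext z; congr 1; ring
      rw [h]
      exact Real.tendsto_exp_neg_atTop_nhds_zero.comp
        (Filter.Tendsto.const_mul_atTop h1β Filter.tendsto_id)
    have hlim : Filter.Tendsto (fun z : ℝ => α * x 0 + (1 - α) * Real.exp ((β - 1) * z) * x 2)
        Filter.atTop (nhds (α * x 0)) := by
      have h := (((hexp.const_mul (1 - α)).mul_const (x 2)).const_add (α * x 0))
      simpa using h
    have h := ge_of_tendsto' hlim hbound
    nlinarith [h]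
  have hx2nn : ∀ x ∈ C, 0 ≤ x 2 := by
    intro x hx
    have hbound : ∀ z : ℝ, 0 ≤ α * Real.exp ((1 - β) * z) * x 0 + (1 - α) * x 2 := by
      intro z
      have h := mul_nonneg (Real.exp_pos (-(β * z))).le (hpos2 x hx z)
      have e0 : Real.exp (-(β * z)) * Real.exp (β * z) = 1 := by rw [← Real.exp_add]; simp
      have e2 : Real.exp ((1 - β) * z) = Real.exp z * Real.exp (-(β * z)) := by
        rw [← Real.exp_add]; congr 1; ring
      have heq : Real.exp (-(β * z)) * (α * Real.exp z * x 0 + (1 - α) * Real.exp (β * z) * x 2)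
          = α * Real.exp ((1 - β) * z) * x 0 + (1 - α) * x 2 := by
        rw [e2]; linear_combination ((1 - α) * x 2) * e0
      rw [heq] at h; exact h
    have hexp : Filter.Tendsto (fun z : ℝ => Real.exp ((1 - β) * z)) Filter.atBot (nhds 0) :=
      Real.tendsto_exp_atBot.comp (Filter.Tendsto.const_mul_atBot h1β Filter.tendsto_id)
    have hlim : Filter.Tendsto (fun z : ℝ => α * Real.exp ((1 - β) * z) * x 0 + (1 - α) * x 2)
        Filter.atBot (nhds ((1 - α) * x 2)) := by
      have h := ((hexp.const_mul α).mul_const (x 0)).add_const ((1 - α) * x 2)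
      simpa using h
    have h := ge_of_tendsto' hlim hbound
    nlinarith [h]
  -- aux for K ⊆ C when x1 > 0
  have haux : ∀ x : Fin 3 → ℝ, 0 < x 1 → 0 ≤ x 0 → 0 ≤ x 2 →
      x 1 ≤ x 0 ^ α * x 2 ^ (1 - α) → x ∈ C := by
    intro x h1pos h0 h2 hle
    have hx0 : 0 < x 0 := by
      rcases h0.eq_or_lt with h | h
      · exfalso; rw [← h, Real.zero_rpow hα0.ne', zero_mul] at hle; linarith
      · exact h
    have hx2 : 0 < x 2 := by
      rcases h2.eq_or_lt with h | h
      · exfalso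
        rw [← h, Real.zero_rpow (by linarith : (1 : ℝ) - α ≠ 0), mul_zero] at hle; linarith
      · exact h
    set z := Real.log (x 0) - Real.log (x 1) with hzdef
    have hfz := hfall z
    have hlog : Real.log (x 1) ≤ α * Real.log (x 0) + (1 - α) * Real.log (x 2) := by
      have hrhs : Real.log (x 0 ^ α * x 2 ^ (1 - α))
          = α * Real.log (x 0) + (1 - α) * Real.log (x 2) := by
        rw [Real.log_mul (by positivity) (by positivity), Real.log_rpow hx0, Real.log_rpow hx2]
      have h := (Real.log_le_log_iff h1pos (by positivity)).2 hle
      rwa [hrhs] at h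
    have hexpz : x 1 * Real.exp (β * z) ≤ x 2 := by
      have hl : x 1 * Real.exp (β * z) = Real.exp (Real.log (x 1) + β * z) := by
        rw [Real.exp_add, Real.exp_log h1pos]
      have hr : x 2 = Real.exp (Real.log (x 2)) := (Real.exp_log hx2).symm
      rw [hl, hr]
      apply Real.exp_le_exp.2
      rw [hzdef]
      have key := mul_le_mul_of_nonneg_left hlog h1β.le
      have e4 : (1 - β) * (α * Real.log (x 0) + (1 - α) * Real.log (x 2))
          = -β * Real.log (x 0) + Real.log (x 2) := by
        linear_combination Real.log (x 0) * i4 + Real.log (x 2) * i1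
      linarith [key, e4]
    have hc : 0 ≤ x 2 - x 1 * Real.exp (β * z) := by linarith
    have hez : Real.exp z = x 0 / x 1 := by
      rw [hzdef, Real.exp_sub, Real.exp_log hx0, Real.exp_log h1pos]
    have hdecomp : x = x 1 • fGen β z + (x 2 - x 1 * Real.exp (β * z)) • ![0, 0, 1] := by
      funext i
      fin_cases i
      · simp only [fGen, Pi.add_apply, Pi.smul_apply, smul_eq_mul, Matrix.cons_val_zero]
        rw [hez]
        simp [mul_div_cancel₀ _ h1pos.ne']
      · simp [fGen]
      · simp [fGen]
    rw [hdecomp]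
    exact hadd _ _ (hcone _ _ h1pos.le hfz) (hcone _ _ hc e3mem)
  ext x
  constructor
  · intro hx
    refine ⟨hx0nn x hx, hx2nn x hx, ?_⟩
    have h0 := hx0nn x hx
    have h2 := hx2nn x hx
    rcases h0.eq_or_lt with hx0 | hx0
    · -- x 0 = 0
      have hb : ∀ z : ℝ, |x 1| ≤ (1 - α) * Real.exp (β * z) * x 2 := by
        intro z
        have h := hKey x hx z
        rw [← hx0] at h
        simpa using h
      have hexp : Filter.Tendsto (fun z : ℝ => Real.exp (β * z)) Filter.atTop (nhds 0) := by
        have heq : (fun z : ℝ => Real.exp (β * z)) = fun z => Real.exp (-((-β) * z)) := by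
          funext z; congr 1; ring
        rw [heq]
        exact Real.tendsto_exp_neg_atTop_nhds_zero.comp
          (Filter.Tendsto.const_mul_atTop (neg_pos.2 hβneg) Filter.tendsto_id)
      have hlim : Filter.Tendsto (fun z : ℝ => (1 - α) * Real.exp (β * z) * x 2)
          Filter.atTop (nhds 0) := by
        have h := (hexp.const_mul (1 - α)).mul_const (x 2)
        simpa using h
      have h := ge_of_tendsto' hlim hb
      rw [← hx0, Real.zero_rpow hα0.ne', zero_mul]
      exact h
    rcases h2.eq_or_lt with hx2 | hx2
    · -- x 2 = 0
      have hb : ∀ z : ℝ, |x 1| ≤ α * Real.exp z * x 0 := by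
        intro z
        have h := hKey x hx z
        rw [← hx2] at h
        simpa using h
      have hlim : Filter.Tendsto (fun z : ℝ => α * Real.exp z * x 0)
          Filter.atBot (nhds 0) := by
        have h := (Real.tendsto_exp_atBot.const_mul α).mul_const (x 0)
        simpa using h
      have h := ge_of_tendsto' hlim hb
      rw [← hx2, Real.zero_rpow (by linarith : (1 : ℝ) - α ≠ 0), mul_zero]
      exact h
    · -- both positive
      set u := Real.log (x 0) with hudef
      set v := Real.log (x 2) with hvdef
      set z₀ := (1 - α) * v + (α - 1) * u with hz₀def
      have hKz := hKey x hx z₀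
      have hx0e : x 0 = Real.exp u := (Real.exp_log hx0).symm
      have hx2e : x 2 = Real.exp v := (Real.exp_log hx2).symm
      have E1 : Real.exp z₀ * x 0 = Real.exp (α * u + (1 - α) * v) := by
        rw [hx0e, ← Real.exp_add]; congr 1; rw [hz₀def]; ring
      have E2 : Real.exp (β * z₀) * x 2 = Real.exp (α * u + (1 - α) * v) := by
        rw [hx2e, ← Real.exp_add]; congr 1; rw [hz₀def]
        linear_combination v * i2 + u * i3
      have E3 : x 0 ^ α * x 2 ^ (1 - α) = Real.exp (α * u + (1 - α) * v) := by
        rw [Real.rpow_def_of_pos hx0, Real.rpow_def_of_pos hx2, ← Real.exp_add]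
        congr 1; ring
      rw [E3]
      calc |x 1| ≤ α * Real.exp z₀ * x 0 + (1 - α) * Real.exp (β * z₀) * x 2 := hKz
        _ = Real.exp (α * u + (1 - α) * v) := by
            rw [mul_assoc, mul_assoc, E1, E2]; ring
  · rintro ⟨h0, h2, h1⟩
    rcases lt_trichotomy (x 1) 0 with hneg | hzero | hpos
    · have hsx : Smap x ∈ C := by
        apply haux
        · simp [Smap]; linarith
        · simpa [Smap] using h0
        · simpa [Smap] using h2
        · rw [abs_of_neg hneg] at h1
          simpa [Smap] using h1
      have hxx : x = Smap (Smap x) := by funext i; fin_cases i <;> simp [Smap]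
      rw [hxx]; exact hS hsx
    · have hdec : x = x 0 • ![1, 0, 0] + x 2 • ![(0 : ℝ), 0, 1] := by
        funext i; fin_cases i <;> simp [hzero]
      rw [hdec]; exact hadd _ _ (hcone _ _ h0 e1mem) (hcone _ _ h2 e3mem)
    · exact haux x hpos h0 h2 (by rwa [abs_of_pos hpos] at h1)
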